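/- Let S be a square skew left brace, fix a projection e of S, and let H = {h ∈ S | h·h* = e and h*·h = e}. Then e ∈ H; H is closed under ·, +, the unary operations * and -; for every h ∈ H one has h·e = e·h = h, h·h* = h*·h = e, h + e = e + h = h, and h + (-h) = (-h) + h = e. Hence (H,+,·) is a skew left brace with identity e, in which the multiplicative inverse of h is h* and the additive inverse of h is -h. -/
import Mathlib


/-- A dual weak left ⋆-brace: `(S,+,-)` and `(S,·,⋆)` are regular ⋆-semigroups,
and `x·(y+z) = x·y + (-x) + x·z`, `(-x)+x = x·x⋆`, `x+(-x) = x⋆·x` hold. -/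
class DWLSB (S : Type*) extends Add S, Mul S, Neg S, Star S where
  add_assoc' : ∀ x y z : S, x + y + z = x + (y + z)
  neg_reg : ∀ x : S, x + -x + x = x
  neg_neg' : ∀ x : S, -(-x) = x
  neg_add' : ∀ x y : S, -(x + y) = -y + -x
  mul_assoc' : ∀ x y z : S, x * y * z = x * (y * z)
  star_reg : ∀ x : S, x * star x * x = x
  star_star' : ∀ x : S, star (star x) = x
  star_mul' : ∀ x y : S, star (x * y) = star y * star x
  distrib' : ∀ x y z : S, x * (y + z) = x * y + -x + x * z
  neg_add_self' : ∀ x : S, -x + x = x * star x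
  add_neg_self' : ∀ x : S, x + -x = star x * x

/-- The set of right distributors of a dual weak left ⋆-brace. -/
def Dr (S : Type*) [DWLSB S] : Set S :=
  {z | ∀ a b : S, (a + b) * z = a * z + -z + b * z}

/-- `r : S×S → S×S` is a set-theoretic solution of the Yang–Baxter equation:
`(r×id)∘(id×r)∘(r×id) = (id×r)∘(r×id)∘(id×r)`. -/
def IsYBESolution {S : Type*} (r : S × S → S × S) : Prop :=
  (fun p : S × S × S => ((r (p.1, p.2.1)).1, (r (p.1, p.2.1)).2, p.2.2)) ∘
      (fun p : S × S × S => (p.1, r (p.2.1, p.2.2))) ∘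
      (fun p : S × S × S => ((r (p.1, p.2.1)).1, (r (p.1, p.2.1)).2, p.2.2)) =
    (fun p : S × S × S => (p.1, r (p.2.1, p.2.2))) ∘
      (fun p : S × S × S => ((r (p.1, p.2.1)).1, (r (p.1, p.2.1)).2, p.2.2)) ∘
      (fun p : S × S × S => (p.1, r (p.2.1, p.2.2)))

/-- A square skew left brace: a dual weak left ⋆-brace with `x·x⋆ = x·y·y⋆·x⋆`,
i.e. `(S,·,⋆)` is completely simple. -/
class SSLB (S : Type*) extends DWLSB S where
  square : ∀ x y : S, x * star x = x * y * star y * star x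

theorem stmt18 {S : Type*} [SSLB S] (e : S) (he : e * e = e ∧ star e = e) :
    let H : Set S := {h | h * star h = e ∧ star h * h = e}
    e ∈ H ∧
    (∀ g h : S, g ∈ H → h ∈ H → g * h ∈ H) ∧
    (∀ g h : S, g ∈ H → h ∈ H → g + h ∈ H) ∧
    (∀ g : S, g ∈ H → star g ∈ H) ∧
    (∀ g : S, g ∈ H → -g ∈ H) ∧
    (∀ h : S, h ∈ H →
      h * e = h ∧ e * h = h ∧ h * star h = e ∧ star h * h = e ∧
      h + e = h ∧ e + h = h ∧ h + -h = e ∧ -h + h = e) := by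
  obtain ⟨hee, hse⟩ := he
  intro H
  have hmem : ∀ h : S, h ∈ H ↔ h * star h = e ∧ star h * h = e := fun _ => Iff.rfl
  have heH : e ∈ H := ⟨by rw [hse, hee], by rw [hse, hee]⟩
  -- additive facts for members
  have haddneg : ∀ h : S, h ∈ H → h + -h = e := fun h hh => by
    rw [DWLSB.add_neg_self', hh.2]
  have hnegadd : ∀ h : S, h ∈ H → -h + h = e := fun h hh => by
    rw [DWLSB.neg_add_self', hh.1]
  have haddid : ∀ h : S, h ∈ H → h + e = h ∧ e + h = h := by
    intro h hh
    constructor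
    · calc h + e = h + (-h + h) := by rw [hnegadd h hh]
        _ = h + -h + h := (DWLSB.add_assoc' h (-h) h).symm
        _ = h := DWLSB.neg_reg h
    · calc e + h = h + -h + h := by rw [haddneg h hh]
        _ = h := DWLSB.neg_reg h
  have hmulid : ∀ h : S, h ∈ H → h * e = h ∧ e * h = h := by
    intro h hh
    constructor
    · calc h * e = h * (star h * h) := by rw [hh.2]
        _ = h * star h * h := (DWLSB.mul_assoc' h (star h) h).symm
        _ = h := DWLSB.star_reg h
    · calc e * h = h * star h * h := by rw [hh.1]
        _ = h := DWLSB.star_reg h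
  have hnegH : ∀ g : S, g ∈ H → -g ∈ H := by
    intro g hg
    constructor
    · calc -g * star (-g) = -(-g) + -g := (DWLSB.neg_add_self' (-g)).symm
        _ = g + -g := by rw [DWLSB.neg_neg']
        _ = e := haddneg g hg
    · calc star (-g) * -g = -g + -(-g) := (DWLSB.add_neg_self' (-g)).symm
        _ = -g + g := by rw [DWLSB.neg_neg']
        _ = e := hnegadd g hg
  have hstarH : ∀ g : S, g ∈ H → star g ∈ H := by
    intro g hg
    constructor
    · rw [DWLSB.star_star']; exact hg.2
    · rw [DWLSB.star_star']; exact hg.1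
  have hmulH : ∀ g h : S, g ∈ H → h ∈ H → g * h ∈ H := by
    intro g h hg hh
    constructor
    · calc g * h * star (g * h) = g * h * (star h * star g) := by rw [DWLSB.star_mul']
        _ = g * h * star h * star g := (DWLSB.mul_assoc' (g * h) (star h) (star g)).symm
        _ = g * star g := (SSLB.square g h).symm
        _ = e := hg.1
    · have key : star h * e * h = e := by
        have sq := SSLB.square (star h) e
        rw [DWLSB.star_star', hse] at sq
        have : star h * e * e = star h * e := by
          rw [DWLSB.mul_assoc', hee]
        rw [this] at sq
        rw [← sq, hh.2]
      calc star (g * h) * (g * h) = star h * star g * (g * h) := by rw [DWLSB.star_mul']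
        _ = star h * star g * g * h := (DWLSB.mul_assoc' (star h * star g) g h).symm
        _ = star h * (star g * g) * h := by rw [DWLSB.mul_assoc' (star h) (star g) g]
        _ = star h * e * h := by rw [hg.2]
        _ = e := key
  have haddH : ∀ g h : S, g ∈ H → h ∈ H → g + h ∈ H := by
    intro g h hg hh
    constructor
    · calc (g + h) * star (g + h) = -(g + h) + (g + h) := (DWLSB.neg_add_self' (g + h)).symm
        _ = -h + -g + (g + h) := by rw [DWLSB.neg_add']
        _ = -h + (-g + (g + h)) := DWLSB.add_assoc' _ _ _
        _ = -h + (-g + g + h) := by rw [DWLSB.add_assoc' (-g) g h]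
        _ = -h + (e + h) := by rw [hnegadd g hg]
        _ = -h + h := by rw [(haddid h hh).2]
        _ = e := hnegadd h hh
    · calc star (g + h) * (g + h) = (g + h) + -(g + h) := (DWLSB.add_neg_self' (g + h)).symm
        _ = g + h + (-h + -g) := by rw [DWLSB.neg_add']
        _ = g + (h + (-h + -g)) := DWLSB.add_assoc' _ _ _
        _ = g + (h + -h + -g) := by rw [DWLSB.add_assoc' h (-h) (-g)]
        _ = g + (e + -g) := by rw [haddneg h hh]
        _ = g + -g := by rw [(haddid (-g) (hnegH g hg)).2]
        _ = e := haddneg g hg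
  refine ⟨heH, hmulH, haddH, hstarH, hnegH, ?_⟩
  intro h hh
  exact ⟨(hmulid h hh).1, (hmulid h hh).2, hh.1, hh.2,
    (haddid h hh).1, (haddid h hh).2, haddneg h hh, hnegadd h hh⟩
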